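/- Let M ≥ 1 and D ≥ 1 be natural numbers and δ > 0 a real. If β ≥ 2^{D}·(1 − (D−1)δ/(1 + (D−1)δ))^{−M} − 1, then for every real ρ > 0 condition C3 holds, i.e. M·log₂((1 + ρ + (D−1)δ)/((1 + (D−1)δ)(1+ρ))) + D·log₂((βM + 2M − 1)/((2M−1)(1+β))) + log₂(1+β) ≥ 0. (The proof lower-bounds the first term by M·log₂(1 − (D−1)δ/(1+(D−1)δ)) using ρ/(1+ρ) < 1, and the second term by −D using (βM+2M−1)/((2M−1)(1+β)) ≥ 1/2.) -/

import Mathlib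

open Real

/-- If `β ≥ 2^D (1 - (D-1)δ/(1+(D-1)δ))^{-M} - 1` then condition C3 holds for
every `ρ > 0`. -/
theorem jsdm_C3_sufficient_beta
    (M D : ℕ) (hM : 1 ≤ M) (hD : 1 ≤ D) (δ : ℝ) (hδ : 0 < δ) (β : ℝ)
    (hβ : (2 : ℝ) ^ D *
        ((1 - ((D : ℝ) - 1) * δ / (1 + ((D : ℝ) - 1) * δ)) ^ M)⁻¹ - 1 ≤ β) :
    ∀ ρ : ℝ, 0 < ρ →
      0 ≤ (M : ℝ) * logb 2 ((1 + ρ + ((D : ℝ) - 1) * δ) /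
          ((1 + ((D : ℝ) - 1) * δ) * (1 + ρ))) +
        (D : ℝ) * logb 2 ((β * (M : ℝ) + 2 * (M : ℝ) - 1) /
          ((2 * (M : ℝ) - 1) * (1 + β))) + logb 2 (1 + β) := by
  intro ρ hρ
  set a : ℝ := ((D : ℝ) - 1) * δ with ha_def
  have hD1 : (1 : ℝ) ≤ (D : ℝ) := by exact_mod_cast hD
  have hM1 : (1 : ℝ) ≤ (M : ℝ) := by exact_mod_cast hM
  have ha : 0 ≤ a := mul_nonneg (by linarith) hδ.le
  have ha1 : (0 : ℝ) < 1 + a := by linarith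
  have hkey : 1 - a / (1 + a) = (1 + a)⁻¹ := by field_simp; ring
  have hβ' : 2 ^ D * (1 + a) ^ M - 1 ≤ β := by
    have h2 : ((1 - a / (1 + a)) ^ M)⁻¹ = (1 + a) ^ M := by
      rw [hkey, ← inv_pow, inv_inv]
    rw [h2] at hβ; exact hβ
  have h2D : (2 : ℝ) ≤ 2 ^ D := by
    calc (2 : ℝ) = 2 ^ 1 := (pow_one 2).symm
    _ ≤ 2 ^ D := pow_le_pow_right₀ one_le_two hD
  have hpowa : (1 : ℝ) ≤ (1 + a) ^ M := one_le_pow₀ (by linarith)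
  have hβ1 : (1 : ℝ) ≤ β := by nlinarith
  have L := logb 2 (1 + a)
  have hLnn : 0 ≤ logb 2 (1 + a) := logb_nonneg one_lt_two (by linarith)
  -- term 1 bound
  have ht1 : -(logb 2 (1 + a)) ≤
      logb 2 ((1 + ρ + a) / ((1 + a) * (1 + ρ))) := by
    rw [← Real.logb_inv]
    apply Real.logb_le_logb_of_le one_lt_two (by positivity)
    rw [inv_eq_one_div, div_le_div_iff₀ (by positivity) (by positivity)]
    nlinarith
  -- term 2 bound
  have ht2 : (-1 : ℝ) ≤
      logb 2 ((β * (M : ℝ) + 2 * (M : ℝ) - 1) / ((2 * (M : ℝ) - 1) * (1 + β))) := by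
    have h12 : logb 2 ((2 : ℝ)⁻¹) = -1 := by
      rw [Real.logb_inv, Real.logb_self_eq_one one_lt_two]
    rw [← h12]
    apply Real.logb_le_logb_of_le one_lt_two (by norm_num)
    rw [inv_eq_one_div, div_le_div_iff₀ (by norm_num) (by nlinarith)]
    nlinarith
  -- term 3 bound
  have ht3 : (D : ℝ) + (M : ℝ) * logb 2 (1 + a) ≤ logb 2 (1 + β) := by
    have h1 : logb 2 ((2 : ℝ) ^ D * (1 + a) ^ M) ≤ logb 2 (1 + β) := by
      apply Real.logb_le_logb_of_le one_lt_two (by positivity)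
      linarith
    rwa [Real.logb_mul (by positivity) (by positivity), Real.logb_pow,
      Real.logb_pow, Real.logb_self_eq_one one_lt_two,
      mul_one] at h1
  have hm1 : (M : ℝ) * (-(logb 2 (1 + a))) ≤
      (M : ℝ) * logb 2 ((1 + ρ + a) / ((1 + a) * (1 + ρ))) :=
    mul_le_mul_of_nonneg_left ht1 (by linarith)
  have hm2 : (D : ℝ) * (-1 : ℝ) ≤
      (D : ℝ) * logb 2 ((β * (M : ℝ) + 2 * (M : ℝ) - 1) / ((2 * (M : ℝ) - 1) * (1 + β))) :=
    mul_le_mul_of_nonneg_left ht2 (by linarith)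
  nlinarith [hm1, hm2, ht3]
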